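/- (Lipschitz prefactor bound for the BBK head map.) Assume γ ≥ √(12M) and 0 < h < 1/(4γ). Define Ψ : ℝⁿ × ℝⁿ → ℝⁿ × ℝⁿ by Ψ(x, v) = ( x + h v, (1 + γh/2)^{-1}( v − (h/2)∇U(x + h v) ) ). Then with a = 1/M and b = h/2 + 1/γ, for all (x,v), (x̃,ṽ) ∈ ℝⁿ × ℝⁿ, ‖Ψ(x̃,ṽ) − Ψ(x,v)‖²_{a,b} ≤ 7 · ‖(x̃ − x, ṽ − v)‖²_{a,b}. -/

import Mathlib

open scoped RealInnerProductSpace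

/-- The squared modified Euclidean norm `‖(x,v)‖²_{a,b} = ‖x‖² + 2b⟨x,v⟩ + a‖v‖²`. -/
noncomputable def modNormSq {n : ℕ} (a b : ℝ)
    (z : EuclideanSpace ℝ (Fin n) × EuclideanSpace ℝ (Fin n)) : ℝ :=
  ‖z.1‖ ^ 2 + 2 * b * ⟪z.1, z.2⟫ + a * ‖z.2‖ ^ 2

lemma grad_lip {n : ℕ} {M : ℝ} (hM : 0 ≤ M) (U : EuclideanSpace ℝ (Fin n) → ℝ)
    (hU : ContDiff ℝ 2 U)
    (hpos : ∀ x d : EuclideanSpace ℝ (Fin n), 0 ≤ ⟪fderiv ℝ (gradient U) x d, d⟫)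
    (hub : ∀ x d : EuclideanSpace ℝ (Fin n), ⟪fderiv ℝ (gradient U) x d, d⟫ ≤ M * ‖d‖ ^ 2)
    (y z : EuclideanSpace ℝ (Fin n)) :
    ‖gradient U y - gradient U z‖ ≤ M * ‖y - z‖ := by
  have hd1 : ContDiff ℝ 1 (fderiv ℝ U) := hU.fderiv_right (by norm_num)
  have hgrad_eq : gradient U =
      (InnerProductSpace.toDual ℝ (EuclideanSpace ℝ (Fin n))).symm ∘ (fderiv ℝ U) := rfl
  have hdg : Differentiable ℝ (gradient U) := by
    rw [hgrad_eq]
    exact (InnerProductSpace.toDual ℝ (EuclideanSpace ℝ (Fin n))).symm.toContinuousLinearEquiv.differentiable.comp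
      (hd1.differentiable (by norm_num))
  have hfd : ∀ (x u : EuclideanSpace ℝ (Fin n)), fderiv ℝ (gradient U) x u =
      (InnerProductSpace.toDual ℝ (EuclideanSpace ℝ (Fin n))).symm (fderiv ℝ (fderiv ℝ U) x u) := by
    intro x u
    have hcomp := (InnerProductSpace.toDual ℝ (EuclideanSpace ℝ (Fin n))).symm.comp_fderiv
      (f := fderiv ℝ U) (x := x)
    rw [hgrad_eq, hcomp]
    rfl
  have hB : ∀ (x u vv : EuclideanSpace ℝ (Fin n)), ⟪fderiv ℝ (gradient U) x u, vv⟫ =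
      fderiv ℝ (fderiv ℝ U) x u vv := by
    intro x u vv
    rw [hfd]
    exact InnerProductSpace.toDual_symm_apply
  have hBsym : ∀ (x u vv : EuclideanSpace ℝ (Fin n)), ⟪fderiv ℝ (gradient U) x u, vv⟫ =
      ⟪fderiv ℝ (gradient U) x vv, u⟫ := by
    intro x u vv
    rw [hB, hB]
    exact hU.contDiffAt.isSymmSndFDerivAt (by norm_num) u vv
  have hbnd : ∀ (x w : EuclideanSpace ℝ (Fin n)), ‖fderiv ℝ (gradient U) x w‖ ≤ M * ‖w‖ := by
    intro x w
    set H := fderiv ℝ (gradient U) x with hH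
    by_cases h0 : H w = 0
    · rw [h0, norm_zero]
      positivity
    · have hnHw : 0 < ‖H w‖ := norm_pos_iff.mpr h0
      have hw0 : w ≠ 0 := by
        rintro rfl
        simp at h0
      have hnw : 0 < ‖w‖ := norm_pos_iff.mpr hw0
      set a := ‖H w‖ with ha
      set bb := ‖w‖ with hbb
      have key : 0 ≤ ⟪H (a • w - bb • (H w)), a • w - bb • (H w)⟫ := hpos x _
      have expand : ⟪H (a • w - bb • (H w)), a • w - bb • (H w)⟫ =
          a^2 * ⟪H w, w⟫ - a*bb*⟪H w, H w⟫ - a*bb*⟪H (H w), w⟫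
            + bb^2 * ⟪H (H w), H w⟫ := by
        simp only [map_sub, map_smul, inner_sub_left, inner_sub_right,
          real_inner_smul_left, real_inner_smul_right]
        ring
      have hsymw : ⟪H (H w), w⟫ = ⟪H w, H w⟫ := by
        rw [hBsym x (H w) w]
      have h3 : ⟪H w, H w⟫ = a^2 := real_inner_self_eq_norm_sq _
      have k1 : a^2 * ⟪H w, w⟫ ≤ a^2 * (M * bb^2) :=
        mul_le_mul_of_nonneg_left (hub x w) (sq_nonneg a)
      have k2 : bb^2 * ⟪H (H w), H w⟫ ≤ bb^2 * (M * a^2) :=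
        mul_le_mul_of_nonneg_left (hub x (H w)) (sq_nonneg bb)
      have main : 2 * a^3 * bb ≤ 2 * M * a^2 * bb^2 := by
        rw [expand, hsymw, h3] at key
        nlinarith [key, k1, k2]
      nlinarith [main, mul_pos (mul_pos hnHw hnHw) hnw]
  have hop : ∀ x : EuclideanSpace ℝ (Fin n), ‖fderiv ℝ (gradient U) x‖ ≤ M := fun x =>
    ContinuousLinearMap.opNorm_le_bound _ hM (hbnd x)
  exact convex_univ.norm_image_sub_le_of_norm_fderiv_le
    (fun x _ => hdg x) (fun x _ => hop x) (Set.mem_univ z) (Set.mem_univ y)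

lemma scalar_key (S T XX YY β η Q P : ℝ) (hS : 0 ≤ S) (hT : 0 ≤ T)
    (hXX : 0 ≤ XX) (hYY : 0 ≤ YY)
    (hβ0 : 0 ≤ β) (hβ : β ≤ 33/100) (hη0 : 0 ≤ η) (hη : η ≤ 2/25)
    (hX : XX ≤ S + η*T) (hY : YY ≤ T + (η/2)*XX)
    (hQ : Q ≤ XX*YY) (hP : -(S*T) ≤ P) :
    XX^2 + 2*β*Q + YY^2 ≤ 7*(S^2 + 2*β*P + T^2) := by
  have hX' : XX ≤ S + (2/25)*T := by nlinarith
  have hY' : YY ≤ (1/25)*S + (51/50)*T := by nlinarith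
  have hXY : XX*YY ≤ (S + (2/25)*T) * ((1/25)*S + (51/50)*T) :=
    mul_le_mul hX' hY' hYY (by nlinarith)
  have hX2 : XX^2 ≤ (S + (2/25)*T)^2 := by nlinarith
  have hY2 : YY^2 ≤ ((1/25)*S + (51/50)*T)^2 := by nlinarith
  have h1 : 2*β*Q ≤ (33/50)*(XX*YY) := by nlinarith [mul_nonneg hXX hYY]
  have h2 : -((33/50)*(S*T)) ≤ 2*β*P := by nlinarith [mul_nonneg hS hT]
  nlinarith [sq_nonneg (S - T), mul_nonneg hS hT]

lemma scalar_main (M b h' s t X Y p q : ℝ) (hM : 0 < M)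
    (hb0 : 0 ≤ b) (hb : M*b^2 ≤ 27/256) (hh0 : 0 ≤ h') (hhM : M*h'^2 ≤ 1/192)
    (hs : 0 ≤ s) (ht : 0 ≤ t) (hX0 : 0 ≤ X) (hY0 : 0 ≤ Y)
    (hX : X ≤ s + h'*t) (hY : Y ≤ t + h'/2*(M*X))
    (hq : q ≤ X*Y) (hp : -(s*t) ≤ p) :
    X^2 + 2*b*q + 1/M*Y^2 ≤ 7*(s^2 + 2*b*p + 1/M*t^2) := by
  set c := Real.sqrt M with hc
  have hc2 : c^2 = M := Real.sq_sqrt hM.le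
  have hc0 : 0 < c := Real.sqrt_pos.mpr hM
  have hβ : b*c ≤ 33/100 := by nlinarith [mul_nonneg hb0 hc0.le]
  have hη : h'*c ≤ 2/25 := by nlinarith [mul_nonneg hh0 hc0.le]
  have result := scalar_key (c*s) t (c*X) Y (b*c) (h'*c) (c*q) (c*p)
    (by positivity) ht (by positivity) hY0
    (mul_nonneg hb0 hc0.le) hβ (mul_nonneg hh0 hc0.le) hη
    (by nlinarith) (by nlinarith) (by nlinarith) (by nlinarith)
  have e1 : (1/M) * ((c*X)^2 + 2*(b*c)*(c*q) + Y^2) = X^2 + 2*b*q + 1/M*Y^2 := by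
    rw [← hc2]; field_simp
  have e2 : (1/M) * (7*((c*s)^2 + 2*(b*c)*(c*p) + t^2)) = 7*(s^2 + 2*b*p + 1/M*t^2) := by
    rw [← hc2]; field_simp
  have r2 := mul_le_mul_of_nonneg_left result (by positivity : (0:ℝ) ≤ 1/M)
  rw [e1, e2] at r2
  exact r2

set_option maxHeartbeats 1000000 in
theorem bbk_head_prefactor_bound {n : ℕ} (m M γ h : ℝ)
    (U : EuclideanSpace ℝ (Fin n) → ℝ)
    (hm : 0 < m) (hmM : m < M) (hU : ContDiff ℝ 2 U)
    (hHess : ∀ x d : EuclideanSpace ℝ (Fin n),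
      m * ‖d‖ ^ 2 ≤ ⟪fderiv ℝ (gradient U) x d, d⟫ ∧
        ⟪fderiv ℝ (gradient U) x d, d⟫ ≤ M * ‖d‖ ^ 2)
    (hγ : γ ≥ Real.sqrt (12 * M)) (hh : 0 < h) (hh2 : h < 1 / (4 * γ)) :
    ∀ x v x' v' : EuclideanSpace ℝ (Fin n),
      modNormSq (1 / M) (h / 2 + 1 / γ)
          ((x' + h • v',
              (1 + γ * h / 2)⁻¹ • (v' - (h / 2) • gradient U (x' + h • v'))) -
            (x + h • v,
              (1 + γ * h / 2)⁻¹ • (v - (h / 2) • gradient U (x + h • v)))) ≤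
        7 * modNormSq (1 / M) (h / 2 + 1 / γ) (x' - x, v' - v) := by
  intro x v x' v'
  have hM0 : 0 < M := hm.trans hmM
  have hγ0 : 0 < γ := lt_of_lt_of_le (Real.sqrt_pos.mpr (by positivity)) hγ
  have hγ2 : 12 * M ≤ γ ^ 2 := by
    nlinarith [Real.sq_sqrt (show (0:ℝ) ≤ 12*M by positivity),
      Real.sqrt_nonneg (12*M)]
  have hhγ : h * γ < 1/4 := by
    rw [lt_div_iff₀ (by positivity)] at hh2
    nlinarith
  have hLip : ∀ y z : EuclideanSpace ℝ (Fin n),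
      ‖gradient U y - gradient U z‖ ≤ M * ‖y - z‖ :=
    grad_lip hM0.le U hU
      (fun x d => le_trans (by positivity) (hHess x d).1)
      (fun x d => (hHess x d).2)
  set ξ : EuclideanSpace ℝ (Fin n) := (x' - x) + h • (v' - v) with hξdef
  set g : EuclideanSpace ℝ (Fin n) :=
    gradient U (x' + h • v') - gradient U (x + h • v) with hgdef
  set w : EuclideanSpace ℝ (Fin n) :=
    (1 + γ * h / 2)⁻¹ • ((v' - v) - (h / 2) • g) with hwdef
  have hfst : (x' + h • v') - (x + h • v) = ξ := by rw [hξdef]; module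
  have hsnd : (1 + γ * h / 2)⁻¹ • (v' - (h / 2) • gradient U (x' + h • v')) -
      (1 + γ * h / 2)⁻¹ • (v - (h / 2) • gradient U (x + h • v)) = w := by
    rw [hwdef, hgdef]; module
  have hgn : ‖g‖ ≤ M * ‖ξ‖ := by
    rw [hgdef, ← hfst]
    exact hLip _ _
  have hcpos : (0:ℝ) < 1 + γ * h / 2 := by positivity
  have hcinv : (1 + γ * h / 2)⁻¹ ≤ 1 := by
    have h1 : (1 + γ * h / 2)⁻¹ * (1 + γ * h / 2) = 1 := inv_mul_cancel₀ hcpos.ne'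
    nlinarith [inv_pos.mpr hcpos]
  have hwn : ‖w‖ ≤ ‖v' - v‖ + h/2 * (M * ‖ξ‖) := by
    have e : ‖w‖ = (1 + γ * h / 2)⁻¹ * ‖(v' - v) - (h / 2) • g‖ := by
      rw [hwdef, norm_smul, Real.norm_eq_abs, abs_of_pos (inv_pos.mpr hcpos)]
    have t1 : ‖(v' - v) - (h / 2) • g‖ ≤ ‖v' - v‖ + h/2 * ‖g‖ := by
      refine le_trans (norm_sub_le _ _) ?_
      rw [norm_smul, Real.norm_eq_abs, abs_of_pos (by positivity : (0:ℝ) < h/2)]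
    have hn0 : (0:ℝ) ≤ ‖(v' - v) - (h / 2) • g‖ := norm_nonneg _
    nlinarith [norm_nonneg (v' - v), mul_le_mul_of_nonneg_left hgn
      (by positivity : (0:ℝ) ≤ h/2), inv_pos.mpr hcpos]
  have hξn : ‖ξ‖ ≤ ‖x' - x‖ + h * ‖v' - v‖ := by
    rw [hξdef]
    refine le_trans (norm_add_le _ _) ?_
    rw [norm_smul, Real.norm_eq_abs, abs_of_pos hh]
  have hq : ⟪ξ, w⟫ ≤ ‖ξ‖ * ‖w‖ := real_inner_le_norm ξ w
  have hp : -(‖x' - x‖ * ‖v' - v‖) ≤ ⟪x' - x, v' - v⟫ := by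
    have := abs_real_inner_le_norm (x' - x) (v' - v)
    linarith [neg_abs_le (⟪x' - x, v' - v⟫ : ℝ)]
  have hb0 : (0:ℝ) ≤ h/2 + 1/γ := by positivity
  have hbγ : (h/2 + 1/γ) * γ ≤ 9/8 := by
    have e : (h/2 + 1/γ) * γ = h*γ/2 + 1 := by field_simp
    rw [e]; linarith
  have hbM : M * (h/2 + 1/γ)^2 ≤ 27/256 := by
    nlinarith [mul_nonneg hb0 hγ0.le, sq_nonneg (h/2 + 1/γ),
      mul_le_mul hbγ hbγ (mul_nonneg hb0 hγ0.le) (by norm_num),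
      mul_nonneg (sub_nonneg.mpr hγ2) (sq_nonneg (h/2 + 1/γ))]
  have hhM : M * h^2 ≤ 1/192 := by
    nlinarith [mul_nonneg hh.le hγ0.le,
      mul_nonneg (sub_nonneg.mpr hγ2) (sq_nonneg h)]
  simp only [modNormSq, Prod.fst_sub, Prod.snd_sub]
  rw [hfst, hsnd]
  exact scalar_main M (h/2 + 1/γ) h ‖x' - x‖ ‖v' - v‖ ‖ξ‖ ‖w‖
    ⟪x' - x, v' - v⟫ ⟪ξ, w⟫
    hM0 hb0 hbM hh.le hhM (norm_nonneg _) (norm_nonneg _) (norm_nonneg _)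
    (norm_nonneg _) hξn hwn hq hp
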